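/- Let p ∈ (0,1] and let Φ : (0,∞) → (0,∞) be continuous, of upper type 1 with constant C₁, and of strictly lower type p. Then there exists C ≥ 1, depending only on C₁ and p, such that for every t ∈ (0,∞) the integral ∫₀ᵗ Φ(s)/s ds is finite and C^{-1} Φ(t) ≤ ∫₀ᵗ Φ(s)/s ds ≤ C Φ(t). -/

import Mathlib

open MeasureTheory

/-- For `Φ` continuous on `(0,∞)`, of upper type 1 with constant `C₁` and of
strictly lower type `p ∈ (0,1]`, there is `C ≥ 1` (depending only on `C₁` and `p`) such that
for all `t > 0` the integral `∫₀ᵗ Φ(s)/s ds` is finite and comparable to `Φ(t)`. -/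
theorem stmt1 (p C₁ : ℝ) (hp : p ∈ Set.Ioc (0:ℝ) 1) (hC₁ : 1 ≤ C₁) :
    ∃ C : ℝ, 1 ≤ C ∧
    ∀ Φ : ℝ → ℝ, (∀ t ∈ Set.Ioi (0:ℝ), 0 < Φ t) →
      ContinuousOn Φ (Set.Ioi 0) →
      (∀ s ∈ Set.Ioi (0:ℝ), ∀ t : ℝ, 1 ≤ t → Φ (s * t) ≤ C₁ * t * Φ s) →
      (∀ s ∈ Set.Ioi (0:ℝ), ∀ t ∈ Set.Ioo (0:ℝ) 1, Φ (s * t) ≤ t ^ p * Φ s) →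
      ∀ t ∈ Set.Ioi (0:ℝ),
        IntegrableOn (fun s => Φ s / s) (Set.Ioc 0 t) volume ∧
        C⁻¹ * Φ t ≤ (∫ s in Set.Ioc (0:ℝ) t, Φ s / s) ∧
        (∫ s in Set.Ioc (0:ℝ) t, Φ s / s) ≤ C * Φ t := by
  obtain ⟨hp0, hp1⟩ := hp
  refine ⟨4 * C₁ / p, ?_, ?_⟩
  · rw [le_div_iff₀ hp0]; nlinarith
  intro Φ hpos hcont hup hlow t ht
  rw [Set.mem_Ioi] at ht
  have hΦt := hpos t (Set.mem_Ioi.mpr ht)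
  have htp : (0:ℝ) < t ^ p := Real.rpow_pos_of_pos ht p
  -- pointwise upper bound
  have key : ∀ s ∈ Set.Ioc (0:ℝ) t, Φ s / s ≤ Φ t / t ^ p * s ^ (p - 1) := by
    intro s hs
    obtain ⟨hs0, hst⟩ := hs
    have hΦs : Φ s ≤ (s / t) ^ p * Φ t := by
      rcases eq_or_lt_of_le hst with h | h
      · subst h; rw [div_self hs0.ne', Real.one_rpow, one_mul]
      · have := hlow t (Set.mem_Ioi.mpr ht) (s / t) ⟨div_pos hs0 ht, (div_lt_one ht).mpr h⟩
        rwa [mul_div_cancel₀ _ ht.ne'] at this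
    have h2 : (s / t) ^ p * Φ t / s = Φ t / t ^ p * s ^ (p - 1) := by
      rw [Real.div_rpow hs0.le ht.le, Real.rpow_sub hs0, Real.rpow_one]
      field_simp
    calc Φ s / s ≤ (s / t) ^ p * Φ t / s := by gcongr
      _ = Φ t / t ^ p * s ^ (p - 1) := h2
  -- integrability
  have hrpow : IntegrableOn (fun s : ℝ => s ^ (p - 1)) (Set.Ioc 0 t) := by
    rw [← intervalIntegrable_iff_integrableOn_Ioc_of_le ht.le]
    exact intervalIntegral.intervalIntegrable_rpow' (by linarith)
  have hg : IntegrableOn (fun s : ℝ => Φ t / t ^ p * s ^ (p - 1)) (Set.Ioc 0 t) :=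
    hrpow.const_mul _
  have hmeas : AEStronglyMeasurable (fun s => Φ s / s) (volume.restrict (Set.Ioc 0 t)) := by
    apply ContinuousOn.aestronglyMeasurable _ measurableSet_Ioc
    exact (hcont.mono fun x hx => Set.mem_Ioi.mpr hx.1).div continuousOn_id
      fun x hx => hx.1.ne'
  have hint : IntegrableOn (fun s => Φ s / s) (Set.Ioc 0 t) := by
    apply Integrable.mono' hg hmeas
    filter_upwards [ae_restrict_mem measurableSet_Ioc] with s hs
    rw [Real.norm_eq_abs, abs_of_pos (div_pos (hpos s (Set.mem_Ioi.mpr hs.1)) hs.1)]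
    exact key s hs
  refine ⟨hint, ?_, ?_⟩
  · -- lower bound
    have hsub : Set.Ioc (t/2) t ⊆ Set.Ioc 0 t := Set.Ioc_subset_Ioc_left (by linarith)
    have hlow2 : ∀ s ∈ Set.Ioc (t/2) t, Φ t / (C₁ * t) ≤ Φ s / s := by
      intro s hs
      have hs0 : 0 < s := lt_trans (by linarith) hs.1
      have h1 : (1:ℝ) ≤ t / s := (one_le_div hs0).mpr hs.2
      have h2 := hup s (Set.mem_Ioi.mpr hs0) (t / s) h1
      rw [mul_div_cancel₀ _ hs0.ne'] at h2
      rw [div_le_div_iff₀ (by positivity) hs0]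
      have h3 : C₁ * (t / s) * Φ s * s = Φ s * (C₁ * t) := by field_simp
      nlinarith [hpos s (Set.mem_Ioi.mpr hs0)]
    have hconst : IntegrableOn (fun _ : ℝ => Φ t / (C₁ * t)) (Set.Ioc (t/2) t) :=
      integrableOn_const measure_Ioc_lt_top.ne
    have hint2 : IntegrableOn (fun s => Φ s / s) (Set.Ioc (t/2) t) := hint.mono_set hsub
    have h3 : Φ t / (2 * C₁) ≤ ∫ s in Set.Ioc (t/2) t, Φ s / s := by
      have h4 := setIntegral_mono_on hconst hint2 measurableSet_Ioc hlow2
      rw [setIntegral_const, Real.volume_real_Ioc_of_le (by linarith), smul_eq_mul] at h4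
      have h5 : (t - t/2) * (Φ t / (C₁ * t)) = Φ t / (2 * C₁) := by
        field_simp; ring
      linarith [h4, h5.symm.le, h5.le]
    have h6 : (∫ s in Set.Ioc (t/2) t, Φ s / s) ≤ ∫ s in Set.Ioc (0:ℝ) t, Φ s / s := by
      apply setIntegral_mono_set hint
      · filter_upwards [ae_restrict_mem measurableSet_Ioc] with s hs
        exact (div_pos (hpos s (Set.mem_Ioi.mpr hs.1)) hs.1).le
      · exact HasSubset.Subset.eventuallyLE hsub
    have hCinv : (4 * C₁ / p)⁻¹ * Φ t ≤ Φ t / (2 * C₁) := by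
      rw [inv_div, div_mul_eq_mul_div, div_le_div_iff₀ (by positivity) (by positivity)]
      nlinarith [mul_nonneg (mul_nonneg (sub_nonneg.mpr hp1) hΦt.le) (by linarith : (0:ℝ) ≤ C₁)]
    linarith
  · -- upper bound
    have hval : (∫ s in Set.Ioc (0:ℝ) t, s ^ (p - 1)) = t ^ p / p := by
      rw [← intervalIntegral.integral_of_le ht.le,
        integral_rpow (Or.inl (by linarith : (-1:ℝ) < p - 1))]
      have h1 : p - 1 + 1 = p := by ring
      rw [h1, Real.zero_rpow hp0.ne', sub_zero]
    have hupper : (∫ s in Set.Ioc (0:ℝ) t, Φ s / s) ≤ Φ t / p := by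
      calc (∫ s in Set.Ioc (0:ℝ) t, Φ s / s)
          ≤ ∫ s in Set.Ioc (0:ℝ) t, Φ t / t ^ p * s ^ (p - 1) :=
            setIntegral_mono_on hint hg measurableSet_Ioc key
        _ = Φ t / t ^ p * (t ^ p / p) := by rw [integral_const_mul, hval]
        _ = Φ t / p := by field_simp
    have : Φ t / p ≤ 4 * C₁ / p * Φ t := by
      rw [div_le_iff₀ hp0] at *
      have : 4 * C₁ / p * Φ t * p = 4 * C₁ * Φ t := by field_simp
      nlinarith [mul_nonneg (mul_nonneg (sub_nonneg.mpr hp1) hΦt.le) (by linarith : (0:ℝ) ≤ C₁)]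
    linarith
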